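/- Let M ⊆ C be open, connected and simply connected, P, a : M → C holomorphic with P nowhere zero, and let x, y : M → C be two distinct holomorphic solutions of φ_w = P·(a - φ)², i.e. x_w = P(a-x)² and y_w = P(a-y)². Fix w₀ ∈ M, λ₀, ρ₀ > 0, and define λ(w) = λ₀·exp(2 Re ∫_{w₀}^{w} P(ξ)(a(ξ)-x(ξ)) dξ) and ρ(w) = ρ₀·exp(2 Re ∫_{w₀}^{w} P(ξ)(a(ξ)-y(ξ)) dξ). Then the function r(w) = λ(w)·ρ(w)·(x(w)-y(w))·conj(x(w)-y(w)) is constant on M. -/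

import Mathlib

/-- Wirtinger derivative `∂/∂w`. -/
noncomputable def wd (f : ℂ → ℂ) (w : ℂ) : ℂ :=
  (fderiv ℝ f w 1 - Complex.I * fderiv ℝ f w Complex.I) / 2

/-- Wirtinger derivative `∂/∂w̄`. -/
noncomputable def wdbar (f : ℂ → ℂ) (w : ℂ) : ℂ :=
  (fderiv ℝ f w 1 + Complex.I * fderiv ℝ f w Complex.I) / 2

/-- A function with vanishing derivative on an open preconnected set is constant there. -/
lemma const_of_hasDerivAt_zero {M : Set ℂ} (hM : IsOpen M) (hconn : IsPreconnected M)
    {H : ℂ → ℂ} (hH : ∀ w ∈ M, HasDerivAt H 0 w)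
    {w w' : ℂ} (hw : w ∈ M) (hw' : w' ∈ M) : H w = H w' := by
  haveI : PreconnectedSpace M := Subtype.preconnectedSpace hconn
  have hf : IsLocallyConstant (fun z : M => H z.val) := by
    rw [IsLocallyConstant.iff_eventually_eq]
    rintro ⟨z, hz⟩
    obtain ⟨ε, hε, hball⟩ := Metric.isOpen_iff.1 hM z hz
    have hmem : (Subtype.val ⁻¹' Metric.ball z ε) ∈ nhds (⟨z, hz⟩ : M) :=
      continuous_subtype_val.continuousAt.preimage_mem_nhds (Metric.ball_mem_nhds z hε)
    filter_upwards [hmem] with u hu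
    have hconst : ∀ p ∈ Metric.ball z ε, ∀ q ∈ Metric.ball z ε, H p = H q := by
      intro p hp q hq
      refine (convex_ball z ε).is_const_of_fderivWithin_eq_zero (𝕜 := ℂ)
        (fun v hv => ((hH v (hball hv)).differentiableAt).differentiableWithinAt)
        (fun v hv => ?_) hp hq
      rw [fderivWithin_of_isOpen Metric.isOpen_ball hv]
      rw [(hH v (hball hv)).hasFDerivAt.fderiv]
      ext z
      simp
    exact hconst u hu z (Metric.mem_ball_self hε)
  exact hf.apply_eq_of_preconnectedSpace ⟨w, hw⟩ ⟨w', hw'⟩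

/-- `F, G` are the primitives of `P(a-x)`, `P(a-y)` (existing by
simple connectivity), `λ = λ₀ e^{2 Re F}`, `ρ = ρ₀ e^{2 Re G}`; then
`r = λρ|x-y|²` is constant on `M`. -/
theorem stmt16 (M : Set ℂ) (hM : IsOpen M) (hconn : IsConnected M)
    (hsc : SimplyConnectedSpace M)
    (P a x y F G : ℂ → ℂ)
    (hP : DifferentiableOn ℂ P M) (ha : DifferentiableOn ℂ a M)
    (hPne : ∀ w ∈ M, P w ≠ 0)
    (hx : DifferentiableOn ℂ x M) (hy : DifferentiableOn ℂ y M)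
    (hxsol : ∀ w ∈ M, deriv x w = P w * (a w - x w) ^ 2)
    (hysol : ∀ w ∈ M, deriv y w = P w * (a w - y w) ^ 2)
    (hxy : ∀ w ∈ M, x w ≠ y w)
    (hF : DifferentiableOn ℂ F M)
    (hF' : ∀ w ∈ M, deriv F w = P w * (a w - x w))
    (hG : DifferentiableOn ℂ G M)
    (hG' : ∀ w ∈ M, deriv G w = P w * (a w - y w))
    (w₀ : ℂ) (hw₀ : w₀ ∈ M) (hF0 : F w₀ = 0) (hG0 : G w₀ = 0)
    (lam0 rho0 : ℝ) (hlam0 : 0 < lam0) (hrho0 : 0 < rho0) :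
    ∀ w ∈ M, ∀ w' ∈ M,
      lam0 * Real.exp (2 * (F w).re) * (rho0 * Real.exp (2 * (G w).re)) *
        Complex.normSq (x w - y w) =
      lam0 * Real.exp (2 * (F w').re) * (rho0 * Real.exp (2 * (G w').re)) *
        Complex.normSq (x w' - y w') := by
  set H : ℂ → ℂ := fun w => Complex.exp (F w + G w) * (x w - y w) with hH
  have hHd : ∀ w ∈ M, HasDerivAt H 0 w := by
    intro w hw
    have hFw : HasDerivAt F (P w * (a w - x w)) w := by
      rw [← hF' w hw]
      exact ((hF.differentiableAt (hM.mem_nhds hw))).hasDerivAt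
    have hGw : HasDerivAt G (P w * (a w - y w)) w := by
      rw [← hG' w hw]
      exact ((hG.differentiableAt (hM.mem_nhds hw))).hasDerivAt
    have hxw : HasDerivAt x (P w * (a w - x w) ^ 2) w := by
      rw [← hxsol w hw]
      exact ((hx.differentiableAt (hM.mem_nhds hw))).hasDerivAt
    have hyw : HasDerivAt y (P w * (a w - y w) ^ 2) w := by
      rw [← hysol w hw]
      exact ((hy.differentiableAt (hM.mem_nhds hw))).hasDerivAt
    have := ((hFw.add hGw).cexp).mul (hxw.sub hyw)
    have h0 : Complex.exp (F w + G w) * (P w * (a w - x w) + P w * (a w - y w)) * (x w - y w)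
        + Complex.exp (F w + G w) * (P w * (a w - x w) ^ 2 - P w * (a w - y w) ^ 2) = 0 := by
      ring
    simp only [Pi.add_apply, Pi.sub_apply] at this
    rw [h0] at this
    exact this
  intro w hw w' hw'
  have key : ∀ v ∈ M,
      lam0 * Real.exp (2 * (F v).re) * (rho0 * Real.exp (2 * (G v).re)) *
        Complex.normSq (x v - y v) = lam0 * rho0 * Complex.normSq (H v) := by
    intro v _
    have h1 : Complex.normSq (H v)
        = Real.exp (2 * (F v).re) * Real.exp (2 * (G v).re) * Complex.normSq (x v - y v) := by
      have h2 : Complex.normSq (H v)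
          = ‖Complex.exp (F v + G v)‖ ^ 2 * Complex.normSq (x v - y v) := by
        rw [hH]
        simp only [Complex.normSq_eq_norm_sq, map_mul, norm_mul, mul_pow]
      rw [h2, Complex.norm_exp, sq, ← Real.exp_add, Complex.add_re, ← Real.exp_add]
      congr 2
      ring
    rw [h1]; ring
  rw [key w hw, key w' hw',
    const_of_hasDerivAt_zero hM hconn.isPreconnected hHd hw hw']
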